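/- Let N be a natural number, β : Fin N → ℝ with β ℓ > 0 for all ℓ, and equip V := Fin N → ℝ³ with the mass-lumped inner product ⟨φ, ψ⟩_h := ∑ ℓ, β ℓ * (φ ℓ ⬝ ψ ℓ). Let k > 0 and m, m', Θ ∈ V, and suppose the midpoint relation holds in variational form: for every φ ∈ V, ⟨(m' − m)/k, φ⟩_h = ∑ ℓ, β ℓ * (((m ℓ + m' ℓ)/2 ×ᵥ Θ ℓ) ⬝ φ ℓ). Then ‖m' ℓ‖ = ‖m ℓ‖ for every node ℓ; consequently ‖m'‖_h = ‖m‖_h and (⨆ ℓ, ‖m' ℓ‖) = (⨆ ℓ, ‖m ℓ‖). -/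

import Mathlib

open scoped InnerProductSpace BigOperators

noncomputable section

/-- ℝ³ with the Euclidean norm and inner product. -/
abbrev R3 := EuclideanSpace ℝ (Fin 3)

/-- The cross product on ℝ³. -/
def cross3 (a b : R3) : R3 := WithLp.toLp 2 (crossProduct a b)

/-- Mass-lumped inner product `⟨φ, ψ⟩_h := ∑ ℓ, β ℓ * (φ ℓ ⬝ ψ ℓ)`. -/
def innh {N : ℕ} (β : Fin N → ℝ) (φ ψ : Fin N → R3) : ℝ :=
  ∑ ℓ, β ℓ * ⟪φ ℓ, ψ ℓ⟫_ℝ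

/-- Mass-lumped norm `‖φ‖_h := √⟨φ, φ⟩_h`. -/
def normh {N : ℕ} (β : Fin N → ℝ) (φ : Fin N → R3) : ℝ :=
  Real.sqrt (innh β φ φ)

lemma cross3_inner_self (a b : R3) : ⟪cross3 a b, a⟫_ℝ = 0 := by
  have h := dot_self_cross (a : Fin 3 → ℝ) b
  simpa [cross3, PiLp.inner_apply, dotProduct, mul_comm] using h

/-- the implicit midpoint relation conserves the modulus of the
magnetization at every node; consequently the mass-lumped norm and the nodal
sup of the moduli are conserved. -/
theorem stmt1 {N : ℕ} (β : Fin N → ℝ) (hβ : ∀ ℓ, 0 < β ℓ)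
    (k : ℝ) (hk : 0 < k) (m m' Θ : Fin N → R3)
    (hmid : ∀ φ : Fin N → R3,
      innh β (k⁻¹ • (m' - m)) φ
        = ∑ ℓ, β ℓ * ⟪cross3 ((2:ℝ)⁻¹ • (m ℓ + m' ℓ)) (Θ ℓ), φ ℓ⟫_ℝ) :
    (∀ ℓ : Fin N, ‖m' ℓ‖ = ‖m ℓ‖) ∧
      normh β m' = normh β m ∧
      (⨆ ℓ : Fin N, ‖m' ℓ‖) = ⨆ ℓ : Fin N, ‖m ℓ‖ := by
  have key : ∀ ℓ : Fin N, ‖m' ℓ‖ = ‖m ℓ‖ := by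
    intro ℓ
    set φ : Fin N → R3 := fun j => if j = ℓ then m ℓ + m' ℓ else 0 with hφ
    have h := hmid φ
    have hRHS : (∑ j, β j * ⟪cross3 ((2:ℝ)⁻¹ • (m j + m' j)) (Θ j), φ j⟫_ℝ) = 0 := by
      apply Finset.sum_eq_zero
      intro j _
      by_cases hj : j = ℓ
      · subst hj
        simp only [hφ, if_pos rfl]
        have : ⟪cross3 ((2:ℝ)⁻¹ • (m j + m' j)) (Θ j), (2:ℝ)⁻¹ • (m j + m' j)⟫_ℝ = 0 :=
          cross3_inner_self _ _
        rw [real_inner_smul_right] at this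
        have h2 : ⟪cross3 ((2:ℝ)⁻¹ • (m j + m' j)) (Θ j), m j + m' j⟫_ℝ = 0 := by
          have h2' : (2:ℝ)⁻¹ ≠ 0 := by norm_num
          exact (mul_eq_zero.mp this).resolve_left h2'
        rw [h2, mul_zero]
      · simp [hφ, hj]
    have hLHS : innh β (k⁻¹ • (m' - m)) φ
        = β ℓ * (k⁻¹ * ⟪m' ℓ - m ℓ, m ℓ + m' ℓ⟫_ℝ) := by
      unfold innh
      rw [Finset.sum_eq_single ℓ]
      · have he : (k⁻¹ • (m' - m)) ℓ = k⁻¹ • (m' ℓ - m ℓ) := rfl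
        rw [he, real_inner_smul_left]
        simp [hφ]
      · intro j _ hj; simp [hφ, hj]
      · intro h; exact absurd (Finset.mem_univ ℓ) h
    have h0 : ⟪m' ℓ - m ℓ, m ℓ + m' ℓ⟫_ℝ = 0 := by
      have h00 := hLHS.symm.trans (h.trans hRHS)
      rcases mul_eq_zero.mp h00 with h1 | h1
      · exact absurd h1 (hβ ℓ).ne'
      · rcases mul_eq_zero.mp h1 with h2 | h2
        · exact absurd h2 (inv_ne_zero hk.ne')
        · exact h2
    have hexp : ⟪m' ℓ - m ℓ, m ℓ + m' ℓ⟫_ℝ = ‖m' ℓ‖^2 - ‖m ℓ‖^2 := by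
      rw [inner_sub_left, inner_add_right, inner_add_right,
        real_inner_self_eq_norm_sq, real_inner_self_eq_norm_sq,
        real_inner_comm (m' ℓ) (m ℓ)]
      ring
    have : ‖m' ℓ‖^2 = ‖m ℓ‖^2 := by
      have := hexp ▸ h0; linarith
    nlinarith [norm_nonneg (m' ℓ), norm_nonneg (m ℓ)]
  refine ⟨key, ?_, ?_⟩
  · unfold normh innh
    congr 1
    apply Finset.sum_congr rfl
    intro ℓ _
    rw [real_inner_self_eq_norm_sq, real_inner_self_eq_norm_sq, key ℓ]
  · exact iSup_congr fun ℓ => key ℓ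
end
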